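/- Let n ≥ 1 and let A : V → End(V) be a linear map with Ω(A(X)Y,Z) totally symmetric in (X,Y,Z) and A(X)∘A(Y) = 0 for all X,Y ∈ V. Define ψ^A : V → V by ψ^A(x) = x − ½·A(x)x. Then: (1) ψ^{−A} ∘ ψ^A = id_V and ψ^A ∘ ψ^{−A} = id_V, so ψ^A is a bijection; (2) the Fréchet derivative of ψ^A at x is Dψ^A(x) : X ↦ X − A(x)X; (3) ψ^A is a symplectomorphism: Ω(Dψ^A(x)X, Dψ^A(x)Y) = Ω(X,Y) for all x,X,Y; and (4) t ↦ ψ^{tA} is a one-parameter group: ψ^{sA} ∘ ψ^{tA} = ψ^{(s+t)A} for all s,t ∈ ℝ. -/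

import Mathlib

noncomputable section

/-- The standard symplectic form on `ℝ^{2n}`. -/
def Omega (n : ℕ) (x y : Fin (2*n) → ℝ) : ℝ :=
  ∑ i : Fin n, (x ⟨i.1, by have := i.isLt; omega⟩ * y ⟨n + i.1, by have := i.isLt; omega⟩
    - x ⟨n + i.1, by have := i.isLt; omega⟩ * y ⟨i.1, by have := i.isLt; omega⟩)

/-- The map `ψ^A(x) = x − ½·A(x)x` associated to a linear `A : V → End(V)`. -/
def psiMap (n : ℕ)
    (A : (Fin (2*n) → ℝ) →ₗ[ℝ] (Fin (2*n) → ℝ) →ₗ[ℝ] (Fin (2*n) → ℝ))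
    (x : Fin (2*n) → ℝ) : Fin (2*n) → ℝ :=
  x - (1/2 : ℝ) • A x x

lemma Omega_sub_sub (n : ℕ) (a b c d : Fin (2*n) → ℝ) :
    Omega n (a - b) (c - d) =
      Omega n a c - Omega n b c - Omega n a d + Omega n b d := by
  unfold Omega
  rw [← Finset.sum_sub_distrib, ← Finset.sum_sub_distrib, ← Finset.sum_add_distrib]
  refine Finset.sum_congr rfl fun i _ => ?_
  simp only [Pi.sub_apply]; ring

lemma Omega_sub_left (n : ℕ) (a b c : Fin (2*n) → ℝ) :
    Omega n (a - b) c = Omega n a c - Omega n b c := by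
  unfold Omega
  rw [← Finset.sum_sub_distrib]
  refine Finset.sum_congr rfl fun i _ => ?_
  simp only [Pi.sub_apply]; ring

lemma Omega_skew (n : ℕ) (a b : Fin (2*n) → ℝ) : Omega n a b = - Omega n b a := by
  unfold Omega
  rw [← Finset.sum_neg_distrib]
  refine Finset.sum_congr rfl fun i _ => ?_
  ring

lemma Omega_zero_left (n : ℕ) (b : Fin (2*n) → ℝ) : Omega n 0 b = 0 := by
  unfold Omega; simp

lemma Omega_nondeg (n : ℕ) (v : Fin (2*n) → ℝ) (h : ∀ Z, Omega n v Z = 0) : v = 0 := by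
  funext j
  have hn0 : 0 < n := by have := j.isLt; omega
  simp only [Pi.zero_apply]
  rcases lt_or_ge j.1 n with hj | hj
  · have h1 : (⟨j.1, by omega⟩ : Fin (2*n)) = j := Fin.ext rfl
    have := h (Pi.single (⟨n + j.1, by omega⟩ : Fin (2*n)) 1)
    rw [Omega, Finset.sum_eq_single (⟨j.1, hj⟩ : Fin n)] at this
    · simp only [Pi.single_apply] at this
      rw [if_pos trivial, if_neg (by simp [Fin.ext_iff]; omega), h1] at this
      linarith
    · intro i _ hi
      have hne : i.1 ≠ j.1 := fun e => hi (Fin.ext e)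
      have hi1 : i.1 < 2*n := by have := i.isLt; omega
      simp only [Pi.single_apply]
      rw [if_neg (by simp [Fin.ext_iff]; omega), if_neg (by simp [Fin.ext_iff]; omega)]
      ring
    · simp
  · have h1 : (⟨n + (j.1 - n), by have := j.isLt; omega⟩ : Fin (2*n)) = j := Fin.ext (by simp; omega)
    have := h (Pi.single (⟨j.1 - n, by have := j.isLt; omega⟩ : Fin (2*n)) 1)
    rw [Omega, Finset.sum_eq_single (⟨j.1 - n, by have := j.isLt; omega⟩ : Fin n)] at this
    · simp only [Pi.single_apply] at this
      rw [if_neg (by simp [Fin.ext_iff]; omega)] at this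
      have h2 : v ⟨n + (j.1 - n), by have := j.isLt; omega⟩ = 0 := by simpa using this
      rw [← h1]; exact h2
    · intro i _ hi
      have hne : i.1 ≠ j.1 - n := fun e => hi (Fin.ext e)
      simp only [Pi.single_apply]
      rw [if_neg (by simp [Fin.ext_iff]; omega), if_neg (by simp [Fin.ext_iff]; omega)]
      ring
    · simp

/-- The continuous bilinear version of `A`. -/
def Acont (n : ℕ)
    (A : (Fin (2*n) → ℝ) →ₗ[ℝ] (Fin (2*n) → ℝ) →ₗ[ℝ] (Fin (2*n) → ℝ)) :
    (Fin (2*n) → ℝ) →L[ℝ] (Fin (2*n) → ℝ) →L[ℝ] (Fin (2*n) → ℝ) :=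
  LinearMap.toContinuousLinearMap
    { toFun := fun x => LinearMap.toContinuousLinearMap (A x),
      map_add' := by intros; ext; simp,
      map_smul' := by intros; ext; simp }

@[simp] lemma Acont_apply (n : ℕ) (A) (x y : Fin (2*n) → ℝ) :
    Acont n A x y = A x y := by
  simp [Acont]

lemma psi_hasFDerivAt (n : ℕ) (A) (hA : ∀ u v : Fin (2*n) → ℝ, A u v = A v u)
    (x : Fin (2*n) → ℝ) :
    HasFDerivAt (psiMap n A)
      (ContinuousLinearMap.id ℝ _ - LinearMap.toContinuousLinearMap (A x)) x := by
  have hb : HasFDerivAt (fun y => (Acont n A) y y)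
      (((Acont n A) x).comp (ContinuousLinearMap.id ℝ _)
        + (Acont n A).flip ((ContinuousLinearMap.id ℝ _) x)) x :=
    ((Acont n A).hasFDerivAt).clm_apply (hasFDerivAt_id x)
  have heq : psiMap n A = fun y => y - (1/2 : ℝ) • (Acont n A) y y := by
    funext y; simp [psiMap]
  rw [heq]
  have h2 : HasFDerivAt (fun y => y - (1/2 : ℝ) • (Acont n A) y y) _ x :=
    (hasFDerivAt_id x).sub (hb.const_smul (1/2 : ℝ))
  refine h2.congr_fderiv ?_
  symm
  refine ContinuousLinearMap.ext fun X => ?_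
  simp only [ContinuousLinearMap.sub_apply, ContinuousLinearMap.id_apply,
    ContinuousLinearMap.smul_apply, ContinuousLinearMap.add_apply,
    ContinuousLinearMap.coe_comp', Function.comp_apply,
    ContinuousLinearMap.flip_apply, Acont_apply,
    LinearMap.coe_toContinuousLinearMap']
  rw [hA X x]
  module

/-- For linear `A : V → End(V)` with `Ω(A(X)Y,Z)` totally symmetric and
`A(X)∘A(Y) = 0`, the map `ψ^A(x) = x − ½A(x)x` is a bijection with inverse `ψ^{−A}`, has
derivative `X ↦ X − A(x)X`, is a symplectomorphism, and `t ↦ ψ^{tA}` is a one-parameter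
group. -/
theorem psiA_symplectomorphism (n : ℕ) (hn : 1 ≤ n)
    (A : (Fin (2*n) → ℝ) →ₗ[ℝ] (Fin (2*n) → ℝ) →ₗ[ℝ] (Fin (2*n) → ℝ))
    (hsym₁ : ∀ X Y Z, Omega n (A X Y) Z = Omega n (A Y X) Z)
    (hsym₂ : ∀ X Y Z, Omega n (A X Y) Z = Omega n (A X Z) Y)
    (hnil : ∀ X Y Z, A X (A Y Z) = 0) :
    (∀ x, psiMap n (-A) (psiMap n A x) = x) ∧
    (∀ x, psiMap n A (psiMap n (-A) x) = x) ∧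
    Function.Bijective (psiMap n A) ∧
    (∀ x X, fderiv ℝ (psiMap n A) x X = X - A x X) ∧
    (∀ x X Y, Omega n (fderiv ℝ (psiMap n A) x X) (fderiv ℝ (psiMap n A) x Y) =
      Omega n X Y) ∧
    (∀ (s t : ℝ) (x : Fin (2*n) → ℝ),
      psiMap n (s • A) (psiMap n (t • A) x) = psiMap n ((s + t) • A) x) := by
  -- symmetry of A as a bilinear map
  have hsymAB : ∀ u v, A u v = A v u := by
    intro u v
    have h0 : A u v - A v u = 0 := by
      refine Omega_nondeg n _ fun Z => ?_
      rw [Omega_sub_left, hsym₁ u v Z]; ring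
    exact sub_eq_zero.mp h0
  have key : ∀ y z w, A (A y z) w = 0 := by
    intro y z w; rw [hsymAB]; exact hnil w y z
  have hA2 : ∀ (c : ℝ) (x : Fin (2*n) → ℝ),
      A (x + c • A x x) (x + c • A x x) = A x x := by
    intro c x
    simp [hnil, key]
  have part1 : ∀ x, psiMap n (-A) (psiMap n A x) = x := by
    intro x
    have h1 : psiMap n A x = x + (-(1/2) : ℝ) • A x x := by
      simp only [psiMap]; module
    rw [h1]
    simp only [psiMap, LinearMap.neg_apply, hA2]
    module
  have part2 : ∀ x, psiMap n A (psiMap n (-A) x) = x := by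
    intro x
    have h1 : psiMap n (-A) x = x + ((1/2) : ℝ) • A x x := by
      simp only [psiMap, LinearMap.neg_apply]; module
    rw [h1]
    simp only [psiMap, hA2]
    module
  have hder : ∀ x X, fderiv ℝ (psiMap n A) x X = X - A x X := by
    intro x X
    rw [(psi_hasFDerivAt n A hsymAB x).fderiv]
    simp [LinearMap.coe_toContinuousLinearMap']
  refine ⟨part1, part2, Function.bijective_iff_has_inverse.mpr ⟨psiMap n (-A), part1, part2⟩,
    hder, ?_, ?_⟩
  · intro x X Y
    rw [hder, hder, Omega_sub_sub]
    have e1 : Omega n (A x Y) X = Omega n (A x X) Y := hsym₂ x Y X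
    have e2 : Omega n X (A x Y) = - Omega n (A x Y) X := Omega_skew n X (A x Y)
    have e3 : Omega n (A x X) (A x Y) = 0 := by
      rw [hsym₂ x X (A x Y), hnil, Omega_zero_left]
    rw [e3, e2, e1]; ring
  · intro s t x
    have h1 : psiMap n (t • A) x = x + (-(t/2) : ℝ) • A x x := by
      simp only [psiMap, LinearMap.smul_apply]; module
    rw [h1]
    simp only [psiMap, LinearMap.smul_apply, hA2]
    module
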